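/- Let 𝒯 be a set of rooted binary phylogenetic X-trees and let N be a hybridization network for 𝒯 with hybridization number k. Then the deletion forest of N is an acyclic agreement forest of 𝒯 with at most k+1 components. -/

import Mathlib

open scoped Classical

/-! ## Finite directed graphs on `ℕ` -/

/-- A finite directed graph with vertices drawn from `ℕ`. -/
structure FinDigraph where
  verts : Finset ℕ
  edges : Finset (ℕ × ℕ)
deriving DecidableEq

namespace FinDigraph

def Adj (G : FinDigraph) (u v : ℕ) : Prop := (u, v) ∈ G.edges

def indeg (G : FinDigraph) (v : ℕ) : ℕ := (G.edges.filter fun e => e.2 = v).card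

def outdeg (G : FinDigraph) (v : ℕ) : ℕ := (G.edges.filter fun e => e.1 = v).card

def Reaches (G : FinDigraph) : ℕ → ℕ → Prop := Relation.ReflTransGen G.Adj

def Acyclic (G : FinDigraph) : Prop := ∀ u v, G.Adj u v → ¬ G.Reaches v u

/-- All edge endpoints are vertices. -/
def WF (G : FinDigraph) : Prop := ∀ e ∈ G.edges, e.1 ∈ G.verts ∧ e.2 ∈ G.verts

def IsSource (G : FinDigraph) (v : ℕ) : Prop := v ∈ G.verts ∧ G.indeg v = 0

def IsLeaf (G : FinDigraph) (v : ℕ) : Prop := v ∈ G.verts ∧ G.outdeg v = 0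

def leaves (G : FinDigraph) : Finset ℕ := G.verts.filter fun v => G.outdeg v = 0

/-- A reticulation: a node of indegree at least 2. -/
def IsRetic (G : FinDigraph) (v : ℕ) : Prop := v ∈ G.verts ∧ 2 ≤ G.indeg v

/-- The hybridization number `∑ (d⁻(v) − 1)` over all nodes `v` with indegree at least 2. -/
def hybNum (G : FinDigraph) : ℕ :=
  ∑ v ∈ G.verts.filter (fun v => 2 ≤ G.indeg v), (G.indeg v - 1)

end FinDigraph

/-! ## Phylogenetic trees and binary networks (taxa are identified with leaf names) -/

/-- A rooted binary phylogenetic tree: a root of indegree 0 and outdegree 1 from which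
everything is reachable; every other node has indegree 1 and outdegree 0 (a leaf) or 2. -/
def IsPhyloTree (T : FinDigraph) : Prop :=
  T.WF ∧ T.Acyclic ∧
  (∃ r, T.IsSource r ∧ T.outdeg r = 1 ∧ ∀ v ∈ T.verts, T.Reaches r v) ∧
  (∀ v ∈ T.verts, T.indeg v = 0 ∨ (T.indeg v = 1 ∧ (T.outdeg v = 0 ∨ T.outdeg v = 2)))

/-- A rooted binary phylogenetic tree whose set of taxa (= leaves) is `X`. -/
def IsTreeOn (T : FinDigraph) (X : Finset ℕ) : Prop := IsPhyloTree T ∧ T.leaves = X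

/-- A binary rooted phylogenetic network: a DAG with a single root of indegree 0 and
outdegree 1 from which everything is reachable; every other node is a leaf
(indegree 1, outdegree 0) or has total degree 3. -/
def IsBinNetwork (N : FinDigraph) : Prop :=
  N.WF ∧ N.Acyclic ∧
  (∃ r, N.IsSource r ∧ N.outdeg r = 1 ∧ ∀ v ∈ N.verts, N.Reaches r v) ∧
  (∀ v ∈ N.verts,
    N.indeg v = 0 ∨ (N.indeg v = 1 ∧ N.outdeg v = 0) ∨
    (N.indeg v + N.outdeg v = 3 ∧ N.outdeg v ≠ 0))

/-! ## Displaying trees: subdivision embeddings -/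

/-- The list of consecutive pairs of a list (the edges of a path). -/
def pathEdges : List ℕ → List (ℕ × ℕ)
  | a :: b :: l => (a, b) :: pathEdges (b :: l)
  | _ => []

/-- Internal vertices of a path. -/
def internals (l : List ℕ) : List ℕ := l.tail.dropLast

/-- The edge set `E` forms a subdivision of the tree `T`, witnessed by the vertex map `φ`
and, for each tree edge, a directed path `P`: suppressing all degree-2 nodes of the graph
formed by `E` yields `T`. -/
def IsSubdivisionVia (T : FinDigraph) (E : Finset (ℕ × ℕ))
    (φ : ℕ → ℕ) (P : ℕ → ℕ → List ℕ) : Prop :=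
  Set.InjOn φ ↑T.verts ∧
  (∀ v, T.IsLeaf v → φ v = v) ∧
  (∀ e ∈ T.edges,
    (P e.1 e.2).head? = some (φ e.1) ∧ (P e.1 e.2).getLast? = some (φ e.2) ∧
    2 ≤ (P e.1 e.2).length ∧ (P e.1 e.2).Nodup ∧
    ∀ d ∈ pathEdges (P e.1 e.2), d ∈ E) ∧
  (∀ d ∈ E, ∃ e ∈ T.edges, d ∈ pathEdges (P e.1 e.2)) ∧
  (∀ e ∈ T.edges, ∀ e' ∈ T.edges, e ≠ e' →
    ∀ x ∈ internals (P e.1 e.2), x ∉ P e'.1 e'.2) ∧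
  (∀ e ∈ T.edges, ∀ x ∈ internals (P e.1 e.2), ∀ w ∈ T.verts, φ w ≠ x)

/-- `N` displays `T`: `T` can be obtained from a subgraph of `N` by contracting edges;
equivalently, some subgraph of `N` is a subdivision of `T` (leaves are kept pointwise). -/
def Displays (N T : FinDigraph) : Prop :=
  ∃ E : Finset (ℕ × ℕ), E ⊆ N.edges ∧
    ∃ (φ : ℕ → ℕ) (P : ℕ → ℕ → List ℕ), IsSubdivisionVia T E φ P

/-- `N` is a hybridization network for the trees `𝒯` on taxa `X`. -/
def IsHybNetworkFor {ι : Type} (N : FinDigraph) (𝒯 : ι → FinDigraph) (X : Finset ℕ) : Prop :=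
  IsBinNetwork N ∧ N.leaves = X ∧ ∀ i, Displays N (𝒯 i)

/-! ## The deletion forest of a network -/

/-- Adjacency after deleting all reticulation edges (edges entering a node of
indegree at least 2), made symmetric. -/
def delAdj (N : FinDigraph) (u v : ℕ) : Prop :=
  ((u, v) ∈ N.edges ∧ N.indeg v ≤ 1) ∨ ((v, u) ∈ N.edges ∧ N.indeg u ≤ 1)

/-- Connectivity after deleting all reticulation edges. -/
def DelReach (N : FinDigraph) : ℕ → ℕ → Prop := Relation.ReflTransGen (delAdj N)

/-- The deletion forest of a network: delete all reticulation edges, discard components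
without taxa, and take the induced partition of the taxa. -/
noncomputable def deletionForest (N : FinDigraph) : Finset (Finset ℕ) :=
  N.leaves.image fun x => N.leaves.filter fun y => DelReach N x y

/-! ## Paths, spans, triples, agreement forests -/

/-- `v` lies on the (undirected) path between the leaves `a` and `b` in the tree `T`. -/
def OnTreePath (T : FinDigraph) (a b v : ℕ) : Prop :=
  (T.Reaches v a ∧ ¬ T.Reaches v b) ∨ (T.Reaches v b ∧ ¬ T.Reaches v a) ∨
  (T.Reaches v a ∧ T.Reaches v b ∧ ∀ w, T.Reaches w a → T.Reaches w b → T.Reaches w v)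

/-- `v` is the lowest common ancestor of `a` and `b` in `T`. -/
def IsLCA (T : FinDigraph) (a b v : ℕ) : Prop :=
  T.Reaches v a ∧ T.Reaches v b ∧ ∀ w, T.Reaches w a → T.Reaches w b → T.Reaches w v

/-- The rooted triple `ab|c` holds in `T`. -/
def Triple (T : FinDigraph) (a b c : ℕ) : Prop :=
  ∃ u v, IsLCA T a b u ∧ IsLCA T a c v ∧ u ≠ v ∧ T.Reaches v u

/-- The restrictions of `T` and `T'` to the taxa in `B` are isomorphic
(same rooted triples). -/
def SameTriples (T T' : FinDigraph) (B : Finset ℕ) : Prop :=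
  ∀ a ∈ B, ∀ b ∈ B, ∀ c ∈ B, (Triple T a b c ↔ Triple T' a b c)

/-- `v` belongs to the minimal subtree `T(B)` of `T` spanning the taxa in `B`. -/
def InSpan (T : FinDigraph) (B : Finset ℕ) (v : ℕ) : Prop :=
  ∃ a ∈ B, ∃ b ∈ B, OnTreePath T a b v

/-- A partition `P` of the taxa is a forest for the tree `T`: its blocks consist of
taxa, cover all taxa, and span node-disjoint subtrees of `T`. -/
def IsForestFor (T : FinDigraph) (P : Finset (Finset ℕ)) : Prop :=
  (∀ B ∈ P, B.Nonempty) ∧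
  (∀ B ∈ P, ∀ x ∈ B, T.IsLeaf x) ∧
  (∀ x, T.IsLeaf x → ∃ B ∈ P, x ∈ B) ∧
  (∀ B ∈ P, ∀ B' ∈ P, B ≠ B' → ∀ v, InSpan T B v → ¬ InSpan T B' v)

/-- `r` is the root of the subtree `T(B)`. -/
def SpanRoot (T : FinDigraph) (B : Finset ℕ) (r : ℕ) : Prop :=
  InSpan T B r ∧ ∀ v, InSpan T B v → T.Reaches r v

/-- Edge of the inheritance graph `IG(𝒯, P)`. -/
def IGAdj {ι : Type} (𝒯 : ι → FinDigraph) (P : Finset (Finset ℕ))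
    (B B' : Finset ℕ) : Prop :=
  B ∈ P ∧ B' ∈ P ∧ B ≠ B' ∧
  ∃ i, ∃ r r', SpanRoot (𝒯 i) B r ∧ SpanRoot (𝒯 i) B' r' ∧ (𝒯 i).Reaches r r'

/-- The inheritance graph contains no directed cycle. -/
def IGAcyclic {ι : Type} (𝒯 : ι → FinDigraph) (P : Finset (Finset ℕ)) : Prop :=
  ∀ B B', IGAdj 𝒯 P B B' → ¬ Relation.ReflTransGen (IGAdj 𝒯 P) B' B

/-- `P` is an agreement forest of the trees `𝒯`. -/
def IsAgreementForest {ι : Type} (𝒯 : ι → FinDigraph) (P : Finset (Finset ℕ)) : Prop :=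
  (∀ i, IsForestFor (𝒯 i) P) ∧ ∀ i j, ∀ B ∈ P, SameTriples (𝒯 i) (𝒯 j) B

/-- `P` is an acyclic agreement forest (AAF) of the trees `𝒯`. -/
def IsAAF {ι : Type} (𝒯 : ι → FinDigraph) (P : Finset (Finset ℕ)) : Prop :=
  IsAgreementForest 𝒯 P ∧ IGAcyclic 𝒯 P

/-! ## Pendant subtrees and chains -/

/-- `Y` is the taxon set of a pendant subtree of `T`. -/
def PendantIn (T : FinDigraph) (Y : Finset ℕ) : Prop :=
  ∃ v ∈ T.verts, ¬ T.IsSource v ∧ Y = T.leaves.filter fun x => T.Reaches v x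

/-- The trees `𝒯` have no nontrivial common pendant subtree. -/
def NoNontrivialCPS {ι : Type} (𝒯 : ι → FinDigraph) : Prop :=
  ¬ ∃ Y : Finset ℕ, 2 ≤ Y.card ∧ (∀ i, PendantIn (𝒯 i) Y) ∧
      ∀ i j, SameTriples (𝒯 i) (𝒯 j) Y

/-- The tuple `xs = (x_1, …, x_q)` is a chain of the tree `T`: with `p_i` the parent
of `x_i`, either `(p_q, …, p_1)` is a directed path of `T`, or `(p_q, …, p_2)` is a
directed path of `T` and `p_1 = p_2`. -/
def ChainIn (T : FinDigraph) (xs : List ℕ) : Prop :=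
  xs ≠ [] ∧ (∀ x ∈ xs, T.IsLeaf x) ∧
  ∃ ps : List ℕ, ps.length = xs.length ∧
    (∀ n (h : n < xs.length) (h' : n < ps.length),
      (ps.get ⟨n, h'⟩, xs.get ⟨n, h⟩) ∈ T.edges) ∧
    (ps.reverse.Chain' (fun a b => (a, b) ∈ T.edges) ∨
      ∃ p q rest, ps = p :: q :: rest ∧ p = q ∧
        (q :: rest).reverse.Chain' (fun a b => (a, b) ∈ T.edges))

/-- A common chain of the trees `𝒯`: a maximal tuple that is a chain of every tree. -/
def CommonChain {ι : Type} (𝒯 : ι → FinDigraph) (xs : List ℕ) : Prop :=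
  (∀ i, ChainIn (𝒯 i) xs) ∧ ∀ ys, (∀ i, ChainIn (𝒯 i) ys) → xs <:+: ys → ys = xs

/-! ## Generators and sides -/

/-- Number of non-leaf children of `v`. -/
noncomputable def nonLeafOutdeg (N : FinDigraph) (v : ℕ) : ℕ :=
  (N.edges.filter fun e => e.1 = v ∧ ¬ N.IsLeaf e.2).card

/-- `v` is suppressed when forming the underlying generator of `N`
(after deleting all leaves it has indegree 1 and outdegree 1). -/
def Suppressed (N : FinDigraph) (v : ℕ) : Prop :=
  v ∈ N.verts ∧ ¬ N.IsLeaf v ∧ N.indeg v = 1 ∧ nonLeafOutdeg N v = 1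

/-- `v` is a node of the underlying generator of `N`. -/
def GenNode (N : FinDigraph) (v : ℕ) : Prop :=
  v ∈ N.verts ∧ ¬ N.IsLeaf v ∧ ¬ Suppressed N v

/-- `l` witnesses the edge side of the underlying generator of `N` running from the
generator node `u` to the generator node `w` (all interior vertices are suppressed). -/
def GenEdgePath (N : FinDigraph) (u w : ℕ) (l : List ℕ) : Prop :=
  GenNode N u ∧ GenNode N w ∧
  l.head? = some u ∧ l.getLast? = some w ∧ 2 ≤ l.length ∧
  l.Chain' (fun a b => (a, b) ∈ N.edges ∧ ¬ N.IsLeaf b) ∧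
  ∀ v ∈ internals l, Suppressed N v

/-- A side of a generator: an edge side or a node side. -/
inductive GenSide : Type
  | edgeSide : ℕ → ℕ → GenSide
  | nodeSide : ℕ → GenSide

/-- `s` is a side of the underlying generator of `N`. -/
def IsSideOf (N : FinDigraph) : GenSide → Prop
  | .edgeSide u w => ∃ l, GenEdgePath N u w l
  | .nodeSide v => GenNode N v ∧ 2 ≤ N.indeg v ∧ nonLeafOutdeg N v = 0

/-- The taxon `x` is on the side `s` of the underlying generator of `N`. -/
def OnSide (N : FinDigraph) (x : ℕ) : GenSide → Prop
  | .edgeSide u w =>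
      N.IsLeaf x ∧ ∃ l, GenEdgePath N u w l ∧ ∃ p ∈ internals l, (p, x) ∈ N.edges
  | .nodeSide v => N.IsLeaf x ∧ (v, x) ∈ N.edges ∧ 2 ≤ N.indeg v ∧ nonLeafOutdeg N v = 0

/-! ## Canonical Networks with Embedded Trees (CNETs) -/

/-- A canonical network with embedded trees: the DAG `H` together with, for every
tree index `i`, the edge set `emb i` of the image of the `i`-th tree, the vertex
embedding `vmap i` and the path system `pmap i` witnessing that the image is a
subdivision of the `i`-th tree. -/
structure CNET (ι : Type) where
  H : FinDigraph
  emb : ι → Finset (ℕ × ℕ)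
  vmap : ι → ℕ → ℕ
  pmap : ι → ℕ → ℕ → List ℕ

/-- Conditions (i)–(viii) of a CNET for the trees `𝒯` over the taxa `X`. -/
def IsCNET {ι : Type} (𝒯 : ι → FinDigraph) (X : Finset ℕ) (𝓗 : CNET ι) : Prop :=
  -- (i) H is a DAG
  𝓗.H.WF ∧ 𝓗.H.Acyclic ∧
  -- (ii) every root has one child
  (∀ v, 𝓗.H.IsSource v → 𝓗.H.outdeg v = 1) ∧
  -- (iii) leaves are bijectively labelled by X (labels identified with leaf names)
  𝓗.H.leaves = X ∧
  -- (iv) each emb i is an image of the tree 𝒯 i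
  (∀ i, 𝓗.emb i ⊆ 𝓗.H.edges ∧
    IsSubdivisionVia (𝒯 i) (𝓗.emb i) (𝓗.vmap i) (𝓗.pmap i)) ∧
  -- (v) every tree image contains an edge incident to a root
  (∀ i, ∃ e ∈ 𝓗.emb i, 𝓗.H.IsSource e.1) ∧
  -- (vi) every edge belongs to some tree image
  (∀ e ∈ 𝓗.H.edges, ∃ i, e ∈ 𝓗.emb i) ∧
  -- (vii) every non-leaf non-root node has exactly two children
  (∀ v ∈ 𝓗.H.verts, 𝓗.H.outdeg v ≠ 0 → 𝓗.H.indeg v ≠ 0 → 𝓗.H.outdeg v = 2) ∧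
  -- (viii) for every non-leaf non-root node some tree image contains both child edges
  (∀ v ∈ 𝓗.H.verts, 𝓗.H.outdeg v ≠ 0 → 𝓗.H.indeg v ≠ 0 →
    ∃ i, ∀ w, (v, w) ∈ 𝓗.H.edges → (v, w) ∈ 𝓗.emb i)

/-- `v` lies, after deleting all reticulation edges, in a component containing a root. -/
def RootComp (H : FinDigraph) (v : ℕ) : Prop := ∃ r, H.IsSource r ∧ DelReach H v r

/-- Equivalence of vertices used for the deletion AAF of a CNET: connectivity after
deleting reticulation edges, with all root components merged (as happens in the
hybridization network induced by the CNET). -/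
def CnetDelEquiv (H : FinDigraph) (u v : ℕ) : Prop :=
  DelReach H u v ∨ (RootComp H u ∧ RootComp H v)

/-- The deletion AAF of a CNET (the deletion forest of its induced network). -/
noncomputable def cnetDeletionAAF (H : FinDigraph) : Finset (Finset ℕ) :=
  H.leaves.image fun x => H.leaves.filter fun y => CnetDelEquiv H x y

/-- `a` and `b` are leaves (the root of `T` counted as a leaf) lying in the same
component of the deletion AAF of the CNET with network `H`. -/
def SameFBlock (H T : FinDigraph) (a b : ℕ) : Prop :=
  (H.IsLeaf a ∧ H.IsLeaf b ∧ CnetDelEquiv H a b) ∨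
  (T.IsSource a ∧ T.IsSource b) ∨
  (T.IsSource a ∧ H.IsLeaf b ∧ RootComp H b) ∨
  (T.IsSource b ∧ H.IsLeaf a ∧ RootComp H a)

/-- `I(T)`: the nodes of the tree `T` lying on no path between two leaves in the same
component of the deletion AAF of the CNET (the root of `T` counted as a leaf). -/
noncomputable def ISet {ι : Type} (𝓗 : CNET ι) (T : FinDigraph) : Finset ℕ :=
  T.verts.filter fun v => ¬ ∃ a b, SameFBlock 𝓗.H T a b ∧ OnTreePath T a b v

/-! ## Signatures of CNETs -/

/-- Vertices lying in a deletion component that contains a taxon or a root. -/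
def InFComp (H : FinDigraph) (v : ℕ) : Prop :=
  ∃ x, (H.IsLeaf x ∨ H.IsSource x) ∧ CnetDelEquiv H v x

/-- The contraction equivalence used to form the signature: the image of every
component of the deletion AAF is contracted to a single node. -/
def ContractEquiv (H : FinDigraph) (u v : ℕ) : Prop :=
  u = v ∨ (InFComp H u ∧ InFComp H v ∧ CnetDelEquiv H u v)

/-- Canonical representative of the contraction class of `v`. -/
noncomputable def kappa (H : FinDigraph) (v : ℕ) : ℕ :=
  if h : (H.verts.filter fun w => ContractEquiv H v w).Nonempty
  then (H.verts.filter fun w => ContractEquiv H v w).min' h else v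

/-- Vertex set of the signature. -/
noncomputable def sigVerts (H : FinDigraph) : Finset ℕ := H.verts.image (kappa H)

/-- Edge multiset of the signature (parallel edges are kept). -/
noncomputable def sigEdges (H : FinDigraph) : Multiset (ℕ × ℕ) :=
  (H.edges.val.map fun e => (kappa H e.1, kappa H e.2)).filter fun e => e.1 ≠ e.2

/-- Multiplicity of the signature edge `(u, v)`. -/
noncomputable def sigMult (H : FinDigraph) (u v : ℕ) : ℕ :=
  ((sigEdges H).filter fun e => e = (u, v)).card

/-- Indegree in the signature. -/
noncomputable def sigIndeg (H : FinDigraph) (v : ℕ) : ℕ :=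
  ((sigEdges H).filter fun e => e.2 = v).card

/-- Hybridization number of the signature. -/
noncomputable def sigHybNum (H : FinDigraph) : ℕ :=
  ∑ v ∈ (sigVerts H).filter (fun v => 2 ≤ sigIndeg H v), (sigIndeg H v - 1)

/-! ## Wiring guesses and descriptions -/

/-- A wiring guess for the image `H(r_C)` of a component root: the number of its parent
edges, which parent edge (if any) each tree image uses, and for each parent edge a tree
for which its top endpoint is a split node. -/
structure WiringGuess (ι : Type) where
  numParents : ℕ
  colourOf : ι → Option ℕ
  splitGuess : ℕ → ι

/-- `x` is a `T`-split node (for the tree with index `i`): both of its child edges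
belong to the image of that tree. -/
def IsTSplit {ι : Type} (𝓗 : CNET ι) (i : ι) (x : ℕ) : Prop :=
  𝓗.H.outdeg x = 2 ∧ ∀ y, (x, y) ∈ 𝓗.H.edges → (x, y) ∈ 𝓗.emb i

/-- The wiring guess `g` holds at the node `w` of the CNET `𝓗`. -/
def GuessHoldsAt {ι : Type} (𝓗 : CNET ι) (w : ℕ) (g : WiringGuess ι) : Prop :=
  ∃ e : ℕ → ℕ,
    Set.InjOn e {j | j < g.numParents} ∧
    (∀ u, (u, w) ∈ 𝓗.H.edges ↔ ∃ j < g.numParents, e j = u) ∧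
    (∀ i j, g.colourOf i = some j ↔ (j < g.numParents ∧ (e j, w) ∈ 𝓗.emb i)) ∧
    (∀ j < g.numParents, IsTSplit 𝓗 (g.splitGuess j) (e j))

/-- `v` is the image `H(r_C)` in `H` of the root of the AAF component with taxa `B`. -/
def IsCompImageRoot (H : FinDigraph) (B : Finset ℕ) (v : ℕ) : Prop :=
  v ∈ H.verts ∧ (∃ x ∈ B, CnetDelEquiv H v x) ∧ (H.indeg v = 0 ∨ 2 ≤ H.indeg v)

/-- A description `(𝒢, F*, 𝒯)`: the deletion AAF `F`, the sets `Inodes i = I(𝒯 i)`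
forming the extension of `F` to `F*`, and the wiring guesses for all component roots
(`none` exactly for the component containing the tree root). -/
structure Description (ι : Type) where
  F : Finset (Finset ℕ)
  Inodes : ι → Finset ℕ
  gF : Finset ℕ → Option (WiringGuess ι)
  gI : ι → ℕ → Option (WiringGuess ι)

/-- The CNET `𝓗` has description `D`. -/
def HasDescription {ι : Type} (𝒯 : ι → FinDigraph) (𝓗 : CNET ι) (D : Description ι) : Prop :=
  cnetDeletionAAF 𝓗.H = D.F ∧
  (∀ i, ISet 𝓗 (𝒯 i) = D.Inodes i) ∧
  (∀ B ∈ D.F,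
    (D.gF B = none ↔ ∃ x ∈ B, RootComp 𝓗.H x) ∧
    ∀ g, D.gF B = some g → ∃ v, IsCompImageRoot 𝓗.H B v ∧ GuessHoldsAt 𝓗 v g) ∧
  (∀ i, ∀ u ∈ D.Inodes i, ∃ g, D.gI i u = some g ∧ GuessHoldsAt 𝓗 (𝓗.vmap i u) g)

/-- Two CNETs are equivalent: their signatures are equal, i.e. there is a
label-preserving isomorphism between their signatures. -/
def CNETEquiv {ι : Type} (𝒯 : ι → FinDigraph) (𝓗₁ 𝓗₂ : CNET ι) : Prop :=
  ∃ θ : ℕ → ℕ,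
    Set.BijOn θ ↑(sigVerts 𝓗₁.H) ↑(sigVerts 𝓗₂.H) ∧
    (∀ u ∈ sigVerts 𝓗₁.H, ∀ v ∈ sigVerts 𝓗₁.H,
      sigMult 𝓗₂.H (θ u) (θ v) = sigMult 𝓗₁.H u v) ∧
    (∀ B ∈ cnetDeletionAAF 𝓗₁.H, ∀ v w : ℕ,
      IsCompImageRoot 𝓗₁.H B v → IsCompImageRoot 𝓗₂.H B w →
      θ (kappa 𝓗₁.H v) = kappa 𝓗₂.H w) ∧
    (∀ i : ι, ∀ u : ℕ, u ∈ ISet 𝓗₁ (𝒯 i) → u ∈ ISet 𝓗₂ (𝒯 i) →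
      θ (kappa 𝓗₁.H (𝓗₁.vmap i u)) = kappa 𝓗₂.H (𝓗₂.vmap i u))

/-! ## Counting wiring guesses (three trees) -/

/-- A structurally possible wiring guess for the image of a node of `I(T)`, where `t`
is the colour of the tree `T`: between 1 and 3 parent edges with disjoint nonempty
colour sets, at least one parent edge of colour `t`, and each split guess taken from
the colour set of the corresponding parent edge. -/
def ValidGuessI (t : Fin 3) (g : WiringGuess (Fin 3)) : Prop :=
  1 ≤ g.numParents ∧ g.numParents ≤ 3 ∧
  (∀ i j, g.colourOf i = some j → j < g.numParents) ∧
  (∀ j < g.numParents, ∃ i, g.colourOf i = some j) ∧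
  g.colourOf t ≠ none ∧
  (∀ j < g.numParents, g.colourOf (g.splitGuess j) = some j)

/-- A structurally possible wiring guess for the image of an AAF component root:
additionally, the union of the colour sets of the parent edges contains all colours. -/
def ValidGuessF (g : WiringGuess (Fin 3)) : Prop :=
  1 ≤ g.numParents ∧ g.numParents ≤ 3 ∧
  (∀ i j, g.colourOf i = some j → j < g.numParents) ∧
  (∀ j < g.numParents, ∃ i, g.colourOf i = some j) ∧
  (∀ i, g.colourOf i ≠ none) ∧
  (∀ j < g.numParents, g.colourOf (g.splitGuess j) = some j)

/-- Two wiring guesses are the same up to renumbering the parent edges. -/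
def GuessIso {ι : Type} (g g' : WiringGuess ι) : Prop :=
  g.numParents = g'.numParents ∧
  ∃ σ : ℕ → ℕ,
    Set.BijOn σ {j | j < g.numParents} {j | j < g.numParents} ∧
    (∀ i, g'.colourOf i = (g.colourOf i).map σ) ∧
    (∀ j < g.numParents, g'.splitGuess (σ j) = g.splitGuess j)

/-! ## Taxa reachable avoiding reticulations -/

/-- There is a directed path from `r` to `x` meeting no reticulation apart
possibly from `r` itself. -/
def PathAvoidRetic (N : FinDigraph) (r x : ℕ) : Prop :=
  ∃ l : List ℕ, l.head? = some r ∧ l.getLast? = some x ∧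
    l.Chain' (fun a b => (a, b) ∈ N.edges) ∧
    ∀ v ∈ l.tail, ¬ N.IsRetic v

/-- `X(r)`: the taxa reachable from `r` by directed paths meeting no reticulation
apart from `r`. -/
noncomputable def XrSet (N : FinDigraph) (r : ℕ) : Finset ℕ :=
  N.leaves.filter fun x => PathAvoidRetic N r x

/-! ## Forests obtained by deleting edges of a tree -/

/-- The partition of the taxa of `T` induced by the connected components of `T`
after deleting the edge set `D`. -/
noncomputable def forestFromDeletion (T : FinDigraph) (D : Finset (ℕ × ℕ)) :
    Finset (Finset ℕ) :=
  T.leaves.image fun x => T.leaves.filter fun y =>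
    Relation.ReflTransGen
      (fun a b => ((a, b) ∈ T.edges ∧ (a, b) ∉ D) ∨ ((b, a) ∈ T.edges ∧ (b, a) ∉ D)) x y

section AAFwork
open Relation FinDigraph

lemma rtg_symm {r : ℕ → ℕ → Prop} (hr : ∀ a b, r a b → r b a) {a b : ℕ}
    (h : ReflTransGen r a b) : ReflTransGen r b a := by
  induction h with
  | refl => exact .refl
  | tail _ hbc ih => exact (ReflTransGen.single (hr _ _ hbc)).trans ih

lemma reaches_antisymm {G : FinDigraph} (hac : G.Acyclic) {a b : ℕ}
    (hab : G.Reaches a b) (hba : G.Reaches b a) : a = b := by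
  rcases hab.cases_head with rfl | ⟨c, hac', hcb⟩
  · rfl
  · exact absurd (hcb.trans hba) (hac _ _ hac')

lemma reaches_mem_left {G : FinDigraph} (hwf : G.WF) {u v : ℕ}
    (h : G.Reaches u v) (hv : v ∈ G.verts) : u ∈ G.verts := by
  rcases h.cases_head with rfl | ⟨c, huc, _⟩
  · exact hv
  · exact (hwf _ huc).1

lemma indeg_pos_of_edge {G : FinDigraph} {u v : ℕ} (h : (u, v) ∈ G.edges) :
    1 ≤ G.indeg v := by
  apply Finset.card_pos.mpr
  exact ⟨(u, v), Finset.mem_filter.mpr ⟨h, rfl⟩⟩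

lemma eq_of_indeg_le_one {G : FinDigraph} {u u' v : ℕ} (h : G.indeg v ≤ 1)
    (h1 : (u, v) ∈ G.edges) (h2 : (u', v) ∈ G.edges) : u = u' := by
  have h3 := Finset.card_le_one.mp h ((u, v)) (Finset.mem_filter.mpr ⟨h1, rfl⟩)
    ((u', v)) (Finset.mem_filter.mpr ⟨h2, rfl⟩)
  exact congrArg Prod.fst h3

lemma no_edge_of_indeg_zero {G : FinDigraph} {u v : ℕ} (h : G.indeg v = 0)
    (he : (u, v) ∈ G.edges) : False := by
  have := indeg_pos_of_edge he
  omega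

/-- the graph of kept (non-reticulation) edges -/
def keptG (N : FinDigraph) : FinDigraph :=
  ⟨N.verts, N.edges.filter fun e => N.indeg e.2 ≤ 1⟩

lemma keptG_adj {N : FinDigraph} {u v : ℕ} :
    (keptG N).Adj u v ↔ (u, v) ∈ N.edges ∧ N.indeg v ≤ 1 := by
  simp [keptG, FinDigraph.Adj]

lemma keptG_adj_nadj {N : FinDigraph} {u v : ℕ} (h : (keptG N).Adj u v) : N.Adj u v :=
  (keptG_adj.mp h).1

lemma kreach_to_reach {N : FinDigraph} {u v : ℕ} (h : (keptG N).Reaches u v) :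
    N.Reaches u v :=
  ReflTransGen.mono (fun _ _ h => keptG_adj_nadj h) _ _ h

lemma kept_up {N : FinDigraph} {u u' v : ℕ} (h : (keptG N).Adj u v)
    (h' : (keptG N).Adj u' v) : u = u' := by
  rw [keptG_adj] at h h'
  exact eq_of_indeg_le_one h.2 h.1 h'.1

lemma kreach_antisymm {N : FinDigraph} (hac : N.Acyclic) {a b : ℕ}
    (h : (keptG N).Reaches a b) (h' : (keptG N).Reaches b a) : a = b := by
  exact reaches_antisymm hac (kreach_to_reach h) (kreach_to_reach h')

lemma delAdj_symm {N : FinDigraph} {u v : ℕ} (h : delAdj N u v) : delAdj N v u :=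
  h.elim Or.inr Or.inl

lemma delreach_symm {N : FinDigraph} {u v : ℕ} (h : DelReach N u v) : DelReach N v u :=
  rtg_symm (fun _ _ h => delAdj_symm h) h

lemma keptG_adj_delAdj {N : FinDigraph} {u v : ℕ} (h : (keptG N).Adj u v) : delAdj N u v :=
  Or.inl (keptG_adj.mp h)

lemma kreach_to_delreach {N : FinDigraph} {u v : ℕ} (h : (keptG N).Reaches u v) :
    DelReach N u v :=
  ReflTransGen.mono (fun _ _ h => keptG_adj_delAdj h) _ _ h

/-- `s` has no kept in-edge. -/
def NoKIn (N : FinDigraph) (s : ℕ) : Prop := ∀ u, ¬ (keptG N).Adj u s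

lemma noKIn_of_kreach {N : FinDigraph} {s v : ℕ} (hv : NoKIn N v)
    (h : (keptG N).Reaches s v) : s = v := by
  rcases h.cases_tail with h | ⟨c, _, hcv⟩
  · exact h.symm
  · exact absurd hcv (hv c)

/-- the anchor chain lemma: ancestors of a common node are comparable, for
unique-predecessor relations. -/
lemma anc_chain {r : ℕ → ℕ → Prop} (hup : ∀ ⦃u u' v⦄, r u v → r u' v → u = u')
    {a u v : ℕ} (hu : ReflTransGen r u a) (hv : ReflTransGen r v a) :
    ReflTransGen r u v ∨ ReflTransGen r v u := by
  induction hu using ReflTransGen.head_induction_on with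
  | refl => exact Or.inr hv
  | head hadj _ ih =>
    rcases ih with h | h
    · exact Or.inl (h.head hadj)
    · rcases h.cases_tail with rfl | ⟨d, hvd, hdc⟩
      · exact Or.inl (ReflTransGen.single hadj)
      · cases hup hadj hdc
        exact Or.inr hvd

lemma delreach_to_kreach {N : FinDigraph} {s : ℕ} (hs : NoKIn N s) {w : ℕ}
    (h : DelReach N s w) : (keptG N).Reaches s w := by
  induction h with
  | refl => exact .refl
  | tail hsb hbc ih =>
    rcases hbc with h | h
    · exact ih.tail (keptG_adj.mpr h)
    · -- kept edge from c to b
      have hcb : (keptG N).Adj _ _ := keptG_adj.mpr h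
      rcases ih.cases_tail with rfl | ⟨p, hsp, hpb⟩
      · exact absurd hcb (hs _)
      · cases kept_up hpb hcb
        exact hsp

lemma exists_source_aux (N : FinDigraph) (hwf : N.WF) (hac : N.Acyclic) :
    ∀ n v, v ∈ N.verts → (N.verts.filter fun u => N.Reaches u v).card ≤ n →
      ∃ s, s ∈ N.verts ∧ NoKIn N s ∧ (keptG N).Reaches s v := by
  intro n
  induction n with
  | zero =>
    intro v hv hcard
    exfalso
    have : v ∈ N.verts.filter fun u => N.Reaches u v :=
      Finset.mem_filter.mpr ⟨hv, .refl⟩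
    have := Finset.card_pos.mpr ⟨v, this⟩
    omega
  | succ n ih =>
    intro v hv hcard
    by_cases hnk : NoKIn N v
    · exact ⟨v, hv, hnk, .refl⟩
    · simp only [NoKIn, not_forall, not_not] at hnk
      obtain ⟨u, hu⟩ := hnk
      have huv : N.Adj u v := keptG_adj_nadj hu
      have huV : u ∈ N.verts := (hwf _ huv).1
      have hsub : (N.verts.filter fun w => N.Reaches w u) ⊂
          (N.verts.filter fun w => N.Reaches w v) := by
        constructor
        · intro w hw
          rw [Finset.mem_filter] at hw ⊢
          exact ⟨hw.1, hw.2.tail huv⟩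
        · intro hcon
          have : v ∈ N.verts.filter fun w => N.Reaches w u :=
            hcon (Finset.mem_filter.mpr ⟨hv, .refl⟩)
          exact hac _ _ huv (Finset.mem_filter.mp this).2
      have hlt := Finset.card_lt_card hsub
      obtain ⟨s, hs1, hs2, hs3⟩ := ih u huV (by omega)
      exact ⟨s, hs1, hs2, hs3.tail hu⟩

lemma exists_source (N : FinDigraph) (hwf : N.WF) (hac : N.Acyclic) {v : ℕ}
    (hv : v ∈ N.verts) : ∃ s, s ∈ N.verts ∧ NoKIn N s ∧ (keptG N).Reaches s v :=
  exists_source_aux N hwf hac _ v hv le_rfl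

/-- a kept in-edge of a member of the component of `s` comes from the component. -/
lemma kept_pred_in_comp {N : FinDigraph} {s : ℕ} (hs : NoKIn N s) {u c : ℕ}
    (hc : (keptG N).Reaches s c) (h : (keptG N).Adj u c) : (keptG N).Reaches s u := by
  rcases hc.cases_tail with rfl | ⟨p, hsp, hpc⟩
  · exact absurd h (hs u)
  · cases kept_up hpc h
    exact hsp

/-- N5: reaching into a component. -/
lemma reach_into_comp {N : FinDigraph} {s : ℕ} (hs : NoKIn N s) {w c : ℕ}
    (hreach : N.Reaches w c) (hc : (keptG N).Reaches s c) :
    (keptG N).Reaches s w ∨ N.Reaches w s := by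
  induction hreach with
  | refl => exact Or.inl hc
  | @tail b c hwb hbc ih =>
    by_cases hdeg : N.indeg c ≤ 1
    · have hk : (keptG N).Adj b c := keptG_adj.mpr ⟨hbc, hdeg⟩
      exact ih (kept_pred_in_comp hs hc hk)
    · have hnkc : NoKIn N c := fun u hu => hdeg (keptG_adj.mp hu).2
      cases noKIn_of_kreach hnkc hc
      exact Or.inr (hwb.tail hbc)

/-- N4': reachability between two members of a component is kept reachability. -/
lemma reach_in_comp {N : FinDigraph} (hac : N.Acyclic) {s : ℕ} (hs : NoKIn N s)
    {c₁ : ℕ} (h1 : (keptG N).Reaches s c₁) :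
    ∀ {c₂}, N.Reaches c₁ c₂ → (keptG N).Reaches s c₂ → (keptG N).Reaches c₁ c₂ := by
  intro c₂ hr h2
  induction hr with
  | refl => exact .refl
  | @tail b c hcb hbc ih =>
    by_cases hdeg : N.indeg c ≤ 1
    · have hk : (keptG N).Adj b c := keptG_adj.mpr ⟨hbc, hdeg⟩
      exact (ih (kept_pred_in_comp hs h2 hk)).tail hk
    · have hnkc : NoKIn N c := fun u hu => hdeg (keptG_adj.mp hu).2
      cases noKIn_of_kreach hnkc h2
      have : c₁ = s := reaches_antisymm hac (hcb.tail hbc) (kreach_to_reach h1)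
      subst this
      exact h1

/-- N6: a node between two members of a component is in the component. -/
lemma between_in_comp {N : FinDigraph} (hac : N.Acyclic) {s : ℕ} (hs : NoKIn N s)
    {c₁ c₂ m : ℕ} (h1 : (keptG N).Reaches s c₁) (h2 : (keptG N).Reaches s c₂)
    (hm1 : N.Reaches c₁ m) (hm2 : N.Reaches m c₂) : (keptG N).Reaches s m := by
  rcases reach_into_comp hs hm2 h2 with h | h
  · exact h
  · have : m = s := reaches_antisymm hac h ((kreach_to_reach h1).trans hm1)
    subst this
    exact .refl

end AAFwork
section AAFwork2
open Relation FinDigraph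

lemma chain'_of_pathEdges {r : ℕ → ℕ → Prop} :
    ∀ l : List ℕ, (∀ d ∈ pathEdges l, r d.1 d.2) → l.Chain' r
  | [] => fun _ => List.isChain_nil
  | [x] => fun _ => List.isChain_singleton x
  | x :: y :: t => fun h => by
    simp only [List.Chain', List.isChain_cons_cons]
    refine ⟨h (x, y) ?_, chain'_of_pathEdges (y :: t) fun d hd => h d ?_⟩
    · simp [pathEdges]
    · simp only [pathEdges, List.mem_cons]
      exact Or.inr hd

lemma chain'_head_last_rtg {r : ℕ → ℕ → Prop} :
    ∀ (l : List ℕ) (a b : ℕ), l.Chain' r → l.head? = some a → l.getLast? = some b →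
      ReflTransGen r a b
  | [] => by simp
  | [x] => by
    intro a b _ ha hb
    simp only [List.head?_cons, Option.some.injEq] at ha
    simp only [List.getLast?_singleton, Option.some.injEq] at hb
    subst ha; subst hb; exact .refl
  | x :: y :: t => by
    intro a b hch ha hb
    simp only [List.head?_cons, Option.some.injEq] at ha
    subst ha
    simp only [List.Chain', List.isChain_cons_cons] at hch
    rw [List.getLast?_cons_cons] at hb
    exact (chain'_head_last_rtg (y :: t) y b hch.2 rfl hb).head hch.1

lemma chain'_mem_between {r : ℕ → ℕ → Prop} :
    ∀ (l : List ℕ) (a b m : ℕ), l.Chain' r → l.head? = some a → l.getLast? = some b →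
      m ∈ l → ReflTransGen r a m ∧ ReflTransGen r m b
  | [] => by simp
  | [x] => by
    intro a b m _ ha hb hm
    simp only [List.head?_cons, Option.some.injEq] at ha
    simp only [List.getLast?_singleton, Option.some.injEq] at hb
    simp only [List.mem_singleton] at hm
    subst ha; subst hb; subst hm; exact ⟨.refl, .refl⟩
  | x :: y :: t => by
    intro a b m hch ha hb hm
    simp only [List.head?_cons, Option.some.injEq] at ha
    subst ha
    simp only [List.Chain', List.isChain_cons_cons] at hch
    rw [List.getLast?_cons_cons] at hb
    rcases List.mem_cons.mp hm with rfl | hm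
    · exact ⟨.refl, (chain'_head_last_rtg (y :: t) y b hch.2 rfl hb).head hch.1⟩
    · have := chain'_mem_between (y :: t) y b m hch.2 rfl hb hm
      exact ⟨this.1.head hch.1, this.2⟩

lemma chain'_crossing {r : ℕ → ℕ → Prop} (p : ℕ → Prop) :
    ∀ (l : List ℕ) (a b : ℕ), l.Chain' r → l.head? = some a → l.getLast? = some b →
      ¬ p a → p b → ∃ x y, r x y ∧ ¬ p x ∧ p y ∧ y ∈ l
  | [] => by simp
  | [x] => by
    intro a b _ ha hb hpa hpb
    simp only [List.head?_cons, Option.some.injEq] at ha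
    simp only [List.getLast?_singleton, Option.some.injEq] at hb
    subst ha; subst hb; exact absurd hpb hpa
  | x :: y :: t => by
    intro a b hch ha hb hpa hpb
    simp only [List.head?_cons, Option.some.injEq] at ha
    subst ha
    simp only [List.Chain', List.isChain_cons_cons] at hch
    rw [List.getLast?_cons_cons] at hb
    by_cases hpy : p y
    · exact ⟨x, y, hch.1, hpa, hpy, by simp⟩
    · obtain ⟨x', y', h1, h2, h3, h4⟩ := chain'_crossing p (y :: t) y b hch.2 rfl hb hpy hpb
      exact ⟨x', y', h1, h2, h3, List.mem_cons_of_mem _ h4⟩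

lemma chain'_mem_of_between {r : ℕ → ℕ → Prop}
    (hup : ∀ ⦃u u' v⦄, r u v → r u' v → u = u')
    (hanti : ∀ ⦃x y⦄, ReflTransGen r x y → ReflTransGen r y x → x = y) :
    ∀ (l : List ℕ) (a b w : ℕ), l.Chain' r → l.head? = some a → l.getLast? = some b →
      ReflTransGen r a w → ReflTransGen r w b → w ∈ l
  | [] => by simp
  | [x] => by
    intro a b w _ ha hb haw hwb
    simp only [List.head?_cons, Option.some.injEq] at ha
    simp only [List.getLast?_singleton, Option.some.injEq] at hb
    subst ha; subst hb
    simp [hanti hwb haw]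
  | x :: y :: t => by
    intro a b w hch ha hb haw hwb
    simp only [List.head?_cons, Option.some.injEq] at ha
    subst ha
    simp only [List.Chain', List.isChain_cons_cons] at hch
    rw [List.getLast?_cons_cons] at hb
    have hyb : ReflTransGen r y b := chain'_head_last_rtg (y :: t) y b hch.2 rfl hb
    rcases anc_chain hup hwb hyb with h | h
    · -- w reaches y : w is x or in tail
      rcases h.cases_tail with rfl | ⟨d, hwd, hdy⟩
      · exact List.mem_cons_of_mem _ (List.mem_of_mem_head? rfl)
      · cases hup hch.1 hdy
        have hxw : x = w := hanti haw hwd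
        simp [hxw]
    · exact List.mem_cons_of_mem _
        (chain'_mem_of_between hup hanti (y :: t) y b w hch.2 rfl hb h hwb)

lemma chain'_strengthen {r r' : ℕ → ℕ → Prop} :
    ∀ l : List ℕ, l.Chain' r → (∀ x ∈ l, ∀ y ∈ l, r x y → r' x y) → l.Chain' r'
  | [] => fun _ _ => List.isChain_nil
  | [x] => fun _ _ => List.isChain_singleton x
  | x :: y :: t => fun hch h => by
    simp only [List.Chain', List.isChain_cons_cons] at hch ⊢
    refine ⟨h x (by simp) y (by simp) hch.1, chain'_strengthen (y :: t) hch.2 ?_⟩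
    intro a ha b hb
    exact h a (List.mem_cons_of_mem _ ha) b (List.mem_cons_of_mem _ hb)

lemma mem_head_last_or_internal : ∀ {l : List ℕ} {x hd g : ℕ}, x ∈ l →
    l.head? = some hd → l.getLast? = some g → x = hd ∨ x = g ∨ x ∈ internals l := by
  intro l x hd g hx hh hg
  match l with
  | [] => exact absurd hx (List.not_mem_nil (a := x))
  | a :: t =>
    simp only [List.head?_cons, Option.some.injEq] at hh
    subst hh
    rcases List.mem_cons.mp hx with rfl | hx2
    · exact Or.inl rfl
    · have ht : t ≠ [] := List.ne_nil_of_mem hx2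
      obtain ⟨t', g', rfl⟩ := (List.eq_nil_or_concat t).resolve_left ht
      rw [List.concat_eq_append] at hx2 hg ⊢
      have hgl : (a :: (t' ++ [g'])).getLast? = some g' := by
        rw [← List.cons_append, List.getLast?_concat]
      rw [hgl, Option.some.injEq] at hg
      subst hg
      rcases List.mem_append.mp hx2 with h1 | h1
      · right; right
        simp only [internals, List.tail_cons]
        rw [List.dropLast_concat]
        exact h1
      · right; left; simpa using h1

end AAFwork2
section AAFwork3
open Relation FinDigraph

lemma kept_up' {N : FinDigraph} :
    ∀ ⦃u u' v : ℕ⦄, (keptG N).Adj u v → (keptG N).Adj u' v → u = u' :=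
  fun _ _ _ h h' => kept_up h h'

lemma exists_lca' {G : FinDigraph} (hwf : G.WF)
    (hup : ∀ ⦃u u' v⦄, G.Adj u v → G.Adj u' v → u = u')
    {a b w₀ : ℕ} (ha : a ∈ G.verts) (hwa : G.Reaches w₀ a) (hwb : G.Reaches w₀ b) :
    ∃ m, G.Reaches m a ∧ G.Reaches m b ∧
      ∀ w, G.Reaches w a → G.Reaches w b → G.Reaches w m := by
  classical
  have hw₀ : w₀ ∈ G.verts.filter (fun w => G.Reaches w a ∧ G.Reaches w b) :=
    Finset.mem_filter.mpr ⟨reaches_mem_left hwf hwa ha, hwa, hwb⟩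
  obtain ⟨m, hmCA, hmax⟩ := Finset.exists_max_image
    (G.verts.filter (fun w => G.Reaches w a ∧ G.Reaches w b))
    (fun w => (G.verts.filter fun u => G.Reaches u w).card) ⟨w₀, hw₀⟩
  rw [Finset.mem_filter] at hmCA
  refine ⟨m, hmCA.2.1, hmCA.2.2, ?_⟩
  intro w hwa' hwb'
  have hwV : w ∈ G.verts := reaches_mem_left hwf hwa' ha
  rcases anc_chain hup hwa' hmCA.2.1 with h | h
  · exact h
  · by_cases hwm : G.Reaches w m
    · exact hwm
    · exfalso
      have hsub : (G.verts.filter fun u => G.Reaches u m) ⊂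
          (G.verts.filter fun u => G.Reaches u w) := by
        constructor
        · intro u hu
          rw [Finset.mem_filter] at hu ⊢
          exact ⟨hu.1, hu.2.trans h⟩
        · intro hcon
          have := hcon (Finset.mem_filter.mpr ⟨hwV, ReflTransGen.refl⟩)
          exact hwm (Finset.mem_filter.mp this).2
      have h2 := hmax w (Finset.mem_filter.mpr ⟨hwV, hwa', hwb'⟩)
      have := Finset.card_lt_card hsub
      omega

lemma tree_up {T : FinDigraph} (hT : IsPhyloTree T) :
    ∀ ⦃u u' v⦄, T.Adj u v → T.Adj u' v → u = u' := by
  intro u u' v h h'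
  have hv : v ∈ T.verts := (hT.1 _ h).2
  rcases hT.2.2.2 v hv with h0 | ⟨h1, _⟩
  · exact (no_edge_of_indeg_zero h0 h).elim
  · exact eq_of_indeg_le_one (le_of_eq h1) h h'

lemma reaches_image {N T : FinDigraph} {E : Finset (ℕ × ℕ)} {φ : ℕ → ℕ}
    {P : ℕ → ℕ → List ℕ} (hE : E ⊆ N.edges) (hsub : IsSubdivisionVia T E φ P)
    {u v : ℕ} (h : T.Reaches u v) : N.Reaches (φ u) (φ v) := by
  induction h with
  | refl => exact ReflTransGen.refl
  | @tail b c hub hbc ih =>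
    have hp := hsub.2.2.1 (b, c) hbc
    have hch : (P b c).Chain' N.Adj :=
      chain'_of_pathEdges _ (fun d hd => hE (hp.2.2.2.2 d hd))
    exact ih.trans (chain'_head_last_rtg _ _ _ hch hp.1 hp.2.1)

lemma kept_path {N T : FinDigraph} (hac : N.Acyclic) {E : Finset (ℕ × ℕ)} {φ : ℕ → ℕ}
    {P : ℕ → ℕ → List ℕ} (hE : E ⊆ N.edges) (hsub : IsSubdivisionVia T E φ P)
    {s : ℕ} (hs : NoKIn N s) {v v' : ℕ}
    (he : (v, v') ∈ T.edges) (h1 : (keptG N).Reaches s (φ v))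
    (h2 : (keptG N).Reaches s (φ v')) :
    (P v v').Chain' (keptG N).Adj ∧ (keptG N).Reaches (φ v) (φ v') ∧
      ∀ m ∈ P v v', (keptG N).Reaches s m := by
  have hp := hsub.2.2.1 (v, v') he
  have hch : (P v v').Chain' N.Adj :=
    chain'_of_pathEdges _ (fun d hd => hE (hp.2.2.2.2 d hd))
  have hmem : ∀ m ∈ P v v', (keptG N).Reaches s m := by
    intro m hm
    have hb := chain'_mem_between _ _ _ m hch hp.1 hp.2.1 hm
    exact between_in_comp hac hs h1 h2 hb.1 hb.2
  have hch' : (P v v').Chain' (keptG N).Adj := by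
    refine chain'_strengthen _ hch ?_
    intro x hx y hy hxy
    by_cases hdeg : N.indeg y ≤ 1
    · exact keptG_adj.mpr ⟨hxy, hdeg⟩
    · exfalso
      have hnky : NoKIn N y := fun u hu => hdeg (keptG_adj.mp hu).2
      cases noKIn_of_kreach hnky (hmem y hy)
      exact hac _ _ hxy (kreach_to_reach (hmem x hx))
  exact ⟨hch', chain'_head_last_rtg _ _ _ hch' hp.1 hp.2.1, hmem⟩

lemma kept_down {N T : FinDigraph} (hac : N.Acyclic) {E : Finset (ℕ × ℕ)} {φ : ℕ → ℕ}
    {P : ℕ → ℕ → List ℕ} (hE : E ⊆ N.edges) (hsub : IsSubdivisionVia T E φ P)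
    {s a : ℕ} (hs : NoKIn N s) (haL : T.IsLeaf a) (ha : (keptG N).Reaches s a) :
    ∀ {v : ℕ}, T.Reaches v a → (keptG N).Reaches s (φ v) →
      (keptG N).Reaches (φ v) a := by
  intro v hva
  induction hva using ReflTransGen.head_induction_on with
  | refl => rw [hsub.2.1 a haL]; exact fun _ => ReflTransGen.refl
  | @head v v' hadj hv'a ih =>
    intro hφv
    have hNva : N.Reaches (φ v') a := by
      have := reaches_image hE hsub hv'a
      rwa [hsub.2.1 a haL] at this
    have hNvv' : N.Reaches (φ v) (φ v') :=
      reaches_image hE hsub (ReflTransGen.single hadj)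
    have hφv' : (keptG N).Reaches s (φ v') :=
      between_in_comp hac hs hφv ha hNvv' hNva
    exact ((kept_path hac hE hsub hs hadj hφv hφv').2.1).trans (ih hφv')

lemma comp_or_sep {N T : FinDigraph} (hac : N.Acyclic) {E : Finset (ℕ × ℕ)} {φ : ℕ → ℕ}
    {P : ℕ → ℕ → List ℕ} (hE : E ⊆ N.edges) (hsub : IsSubdivisionVia T E φ P)
    {s a : ℕ} (hs : NoKIn N s) (haL : T.IsLeaf a) (ha : (keptG N).Reaches s a) :
    ∀ {v : ℕ}, T.Reaches v a → ((keptG N).Reaches s (φ v) ∨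
      ∃ e ∈ T.edges, T.Reaches v e.1 ∧ T.Reaches e.2 a ∧ s ∈ P e.1 e.2) := by
  intro v hva
  induction hva using ReflTransGen.head_induction_on with
  | refl => exact Or.inl (by rwa [hsub.2.1 a haL])
  | @head v v' hadj hv'a ih =>
    rcases ih with hin | ⟨e, he, h1, h2, h3⟩
    · by_cases hv : (keptG N).Reaches s (φ v)
      · exact Or.inl hv
      · right
        have hp := hsub.2.2.1 (v, v') hadj
        have hch : (P v v').Chain' N.Adj :=
          chain'_of_pathEdges _ (fun d hd => hE (hp.2.2.2.2 d hd))
        obtain ⟨x, y, hxy, hnx, hy, hyl⟩ :=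
          chain'_crossing (fun z => (keptG N).Reaches s z) _ _ _ hch hp.1 hp.2.1 hv hin
        have hys : y = s := by
          by_cases hdeg : N.indeg y ≤ 1
          · exact absurd (kept_pred_in_comp hs hy (keptG_adj.mpr ⟨hxy, hdeg⟩)) hnx
          · have hnky : NoKIn N y := fun u hu => hdeg (keptG_adj.mp hu).2
            exact (noKIn_of_kreach hnky hy).symm
        refine ⟨(v, v'), hadj, ReflTransGen.refl, hv'a, ?_⟩
        rwa [hys] at hyl
    · exact Or.inr ⟨e, he, h1.head hadj, h2, h3⟩

lemma double_sided {T : FinDigraph} (hTwf : T.WF) (hTac : T.Acyclic)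
    {E : Finset (ℕ × ℕ)} {φ : ℕ → ℕ} {P : ℕ → ℕ → List ℕ}
    (hsub : IsSubdivisionVia T E φ P)
    {a b m : ℕ} (hma : T.Reaches m a) (hmb : T.Reaches m b)
    (hmin : ∀ w, T.Reaches w a → T.Reaches w b → T.Reaches w m)
    {ea eb : ℕ × ℕ} (hea : ea ∈ T.edges) (heb : eb ∈ T.edges)
    (hea1 : T.Reaches m ea.1) (hea2 : T.Reaches ea.2 a)
    (heb1 : T.Reaches m eb.1) (heb2 : T.Reaches eb.2 b)
    {x : ℕ} (hxa : x ∈ P ea.1 ea.2) (hxb : x ∈ P eb.1 eb.2) : x = φ m := by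
  have hne : ea ≠ eb := by
    rintro rfl
    have h1 : T.Reaches ea.2 m := hmin _ hea2 heb2
    exact hTac _ _ hea (h1.trans hea1)
  have hpa := hsub.2.2.1 ea hea
  have hpb := hsub.2.2.1 eb heb
  have hint := hsub.2.2.2.2.1 ea hea eb heb hne
  have hint2 := hsub.2.2.2.2.1 eb heb ea hea (Ne.symm hne)
  have hx1 : x = φ ea.1 ∨ x = φ ea.2 := by
    rcases mem_head_last_or_internal hxa hpa.1 hpa.2.1 with h | h | h
    · exact Or.inl h
    · exact Or.inr h
    · exact absurd hxb (hint x h)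
  have hx2 : x = φ eb.1 ∨ x = φ eb.2 := by
    rcases mem_head_last_or_internal hxb hpb.1 hpb.2.1 with h | h | h
    · exact Or.inl h
    · exact Or.inr h
    · exact absurd hxa (hint2 x h)
  obtain ⟨ua, huaV, huaeq, hmua, huaa⟩ :
      ∃ u, u ∈ T.verts ∧ x = φ u ∧ T.Reaches m u ∧ T.Reaches u a := by
    rcases hx1 with h | h
    · exact ⟨ea.1, (hTwf ea hea).1, h, hea1, ReflTransGen.head hea hea2⟩
    · exact ⟨ea.2, (hTwf ea hea).2, h, hea1.tail hea, hea2⟩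
  obtain ⟨ub, hubV, hubeq, hmub, hubb⟩ :
      ∃ u, u ∈ T.verts ∧ x = φ u ∧ T.Reaches m u ∧ T.Reaches u b := by
    rcases hx2 with h | h
    · exact ⟨eb.1, (hTwf eb heb).1, h, heb1, ReflTransGen.head heb heb2⟩
    · exact ⟨eb.2, (hTwf eb heb).2, h, heb1.tail heb, heb2⟩
  have huab : ua = ub := hsub.1 (Finset.mem_coe.mpr huaV) (Finset.mem_coe.mpr hubV)
    (by rw [← huaeq, hubeq])
  subst huab
  have hum : ua = m := reaches_antisymm hTac (hmin ua huaa hubb) hmua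
  rw [huaeq, hum]

lemma philca_mem {N T : FinDigraph} (hac : N.Acyclic) (hTwf : T.WF) (hTac : T.Acyclic)
    {E : Finset (ℕ × ℕ)} {φ : ℕ → ℕ} {P : ℕ → ℕ → List ℕ}
    (hE : E ⊆ N.edges) (hsub : IsSubdivisionVia T E φ P)
    {s : ℕ} (hs : NoKIn N s)
    {a b m : ℕ} (haL : T.IsLeaf a) (hbL : T.IsLeaf b)
    (ha : (keptG N).Reaches s a) (hb : (keptG N).Reaches s b)
    (hma : T.Reaches m a) (hmb : T.Reaches m b)
    (hmin : ∀ w, T.Reaches w a → T.Reaches w b → T.Reaches w m) :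
    (keptG N).Reaches s (φ m) := by
  by_contra hcon
  rcases comp_or_sep hac hE hsub hs haL ha hma with h | ⟨ea, hea, h1, h2, h3⟩
  · exact hcon h
  rcases comp_or_sep hac hE hsub hs hbL hb hmb with h | ⟨eb, heb, h1', h2', h3'⟩
  · exact hcon h
  have hx := double_sided hTwf hTac hsub hma hmb hmin hea heb h1 h2 h1' h2' h3 h3'
  exact hcon (hx ▸ ReflTransGen.refl)

lemma path_mem {N T : FinDigraph} (hac : N.Acyclic)
    {E : Finset (ℕ × ℕ)} {φ : ℕ → ℕ} {P : ℕ → ℕ → List ℕ}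
    (hE : E ⊆ N.edges) (hsub : IsSubdivisionVia T E φ P)
    {s a : ℕ} (hs : NoKIn N s) (haL : T.IsLeaf a) (ha : (keptG N).Reaches s a) :
    ∀ {v : ℕ}, T.Reaches v a → (keptG N).Reaches s (φ v) →
      ∀ w, (keptG N).Reaches (φ v) w → (keptG N).Reaches w a →
        (w = φ v ∨ ∃ e ∈ T.edges, T.Reaches v e.1 ∧ T.Reaches e.2 a ∧ w ∈ P e.1 e.2) := by
  intro v hva
  induction hva using ReflTransGen.head_induction_on with
  | refl =>
    intro _ w hw1 hw2
    left
    rw [hsub.2.1 a haL] at hw1 ⊢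
    exact kreach_antisymm hac hw2 hw1
  | @head v v' hadj hv'a ih =>
    intro hφv w hw1 hw2
    have hNva : N.Reaches (φ v') a := by
      have := reaches_image hE hsub hv'a
      rwa [hsub.2.1 a haL] at this
    have hφv' : (keptG N).Reaches s (φ v') := between_in_comp hac hs hφv ha
      (reaches_image hE hsub (ReflTransGen.single hadj)) hNva
    have hkd : (keptG N).Reaches (φ v') a := kept_down hac hE hsub hs haL ha hv'a hφv'
    obtain ⟨hch, hkvv', hmem⟩ := kept_path hac hE hsub hs hadj hφv hφv'
    have hp := hsub.2.2.1 (v, v') hadj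
    rcases anc_chain kept_up' hw2 hkd with hwv' | hv'w
    · right
      refine ⟨(v, v'), hadj, ReflTransGen.refl, hv'a, ?_⟩
      exact chain'_mem_of_between kept_up' (fun x y h h' => kreach_antisymm hac h h')
        _ _ _ _ hch hp.1 hp.2.1 hw1 hwv'
    · rcases ih hφv' w hv'w hw2 with h | ⟨e, he, h1, h2, h3⟩
      · right
        refine ⟨(v, v'), hadj, ReflTransGen.refl, hv'a, ?_⟩
        rw [h]
        exact List.mem_of_mem_getLast? hp.2.1
      · exact Or.inr ⟨e, he, h1.head hadj, h2, h3⟩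

lemma phi_lca_kept {N T : FinDigraph} (hac : N.Acyclic) (hTwf : T.WF) (hTac : T.Acyclic)
    {E : Finset (ℕ × ℕ)} {φ : ℕ → ℕ} {P : ℕ → ℕ → List ℕ}
    (hE : E ⊆ N.edges) (hsub : IsSubdivisionVia T E φ P)
    {s : ℕ} (hs : NoKIn N s)
    {a b m : ℕ} (haL : T.IsLeaf a) (hbL : T.IsLeaf b)
    (ha : (keptG N).Reaches s a) (hb : (keptG N).Reaches s b)
    (hma : T.Reaches m a) (hmb : T.Reaches m b)
    (hmin : ∀ w, T.Reaches w a → T.Reaches w b → T.Reaches w m) :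
    IsLCA (keptG N) a b (φ m) := by
  have hφm := philca_mem hac hTwf hTac hE hsub hs haL hbL ha hb hma hmb hmin
  refine ⟨kept_down hac hE hsub hs haL ha hma hφm,
    kept_down hac hE hsub hs hbL hb hmb hφm, ?_⟩
  intro w hwa hwb
  rcases anc_chain kept_up' hwa (kept_down hac hE hsub hs haL ha hma hφm) with h | h
  · exact h
  · rcases path_mem hac hE hsub hs haL ha hma hφm w h hwa with h1 | ⟨ea, hea, ha1, ha2, ha3⟩
    · exact h1 ▸ ReflTransGen.refl
    rcases path_mem hac hE hsub hs hbL hb hmb hφm w h hwb with h1 | ⟨eb, heb, hb1, hb2, hb3⟩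
    · exact h1 ▸ ReflTransGen.refl
    have hx := double_sided hTwf hTac hsub hma hmb hmin hea heb ha1 ha2 hb1 hb2 ha3 hb3
    exact hx ▸ ReflTransGen.refl

end AAFwork3
section AAFwork4
open Relation FinDigraph

lemma isLeaf_iff {G : FinDigraph} {x : ℕ} : G.IsLeaf x ↔ x ∈ G.leaves := by
  simp [FinDigraph.IsLeaf, FinDigraph.leaves, Finset.mem_filter]

noncomputable def blockOf (N : FinDigraph) (x : ℕ) : Finset ℕ :=
  N.leaves.filter fun y => DelReach N x y

lemma mem_blockOf {N : FinDigraph} {x y : ℕ} :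
    y ∈ blockOf N x ↔ y ∈ N.leaves ∧ DelReach N x y := Finset.mem_filter

lemma blockOf_eq {N : FinDigraph} {x y : ℕ} (h : DelReach N x y) :
    blockOf N x = blockOf N y := by
  ext z
  simp only [mem_blockOf]
  constructor
  · rintro ⟨h1, h2⟩
    exact ⟨h1, (delreach_symm h).trans h2⟩
  · rintro ⟨h1, h2⟩
    exact ⟨h1, h.trans h2⟩

lemma mem_deletionForest {N : FinDigraph} {B : Finset ℕ} :
    B ∈ deletionForest N ↔ ∃ x ∈ N.leaves, blockOf N x = B := by
  simp only [deletionForest, Finset.mem_image, blockOf]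

noncomputable def sOf (N : FinDigraph) (B : Finset ℕ) : ℕ :=
  if h : ∃ s, s ∈ N.verts ∧ NoKIn N s ∧ ∃ x ∈ B, DelReach N x s then h.choose else 0

lemma sOf_spec {N : FinDigraph} (hwf : N.WF) (hac : N.Acyclic) {B : Finset ℕ}
    (hB : B ∈ deletionForest N) :
    sOf N B ∈ N.verts ∧ NoKIn N (sOf N B) ∧ ∀ x ∈ B, DelReach N x (sOf N B) := by
  obtain ⟨x₀, hx₀, hBx⟩ := mem_deletionForest.mp hB
  have hx₀v : x₀ ∈ N.verts := (Finset.mem_filter.mp hx₀).1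
  have hex : ∃ s, s ∈ N.verts ∧ NoKIn N s ∧ ∃ x ∈ B, DelReach N x s := by
    obtain ⟨s, h1, h2, h3⟩ := exists_source N hwf hac hx₀v
    refine ⟨s, h1, h2, x₀, ?_, delreach_symm (kreach_to_delreach h3)⟩
    rw [← hBx]
    exact mem_blockOf.mpr ⟨hx₀, ReflTransGen.refl⟩
  rw [sOf, dif_pos hex]
  obtain ⟨h1, h2, x, hx, h3⟩ := hex.choose_spec
  refine ⟨h1, h2, ?_⟩
  intro y hy
  rw [← hBx] at hy hx
  exact ((delreach_symm (mem_blockOf.mp hy).2).trans (mem_blockOf.mp hx).2).trans h3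

lemma sOf_kreach {N : FinDigraph} (hwf : N.WF) (hac : N.Acyclic) {B : Finset ℕ}
    (hB : B ∈ deletionForest N) {x : ℕ} (hx : x ∈ B) :
    (keptG N).Reaches (sOf N B) x := by
  obtain ⟨_, h2, h3⟩ := sOf_spec hwf hac hB
  exact delreach_to_kreach h2 (delreach_symm (h3 x hx))

lemma source_eq {N : FinDigraph} {s s' w : ℕ} (hs : NoKIn N s) (hs' : NoKIn N s')
    (h : (keptG N).Reaches s w) (h' : (keptG N).Reaches s' w) : s = s' := by
  rcases anc_chain kept_up' h h' with h2 | h2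
  · exact noKIn_of_kreach hs' h2
  · exact (noKIn_of_kreach hs h2).symm

lemma block_eq_of_delreach {N : FinDigraph} {B B' : Finset ℕ}
    (hB : B ∈ deletionForest N) (hB' : B' ∈ deletionForest N)
    {x x' : ℕ} (hx : x ∈ B) (hx' : x' ∈ B') (h : DelReach N x x') : B = B' := by
  obtain ⟨x₀, hx₀, hBx⟩ := mem_deletionForest.mp hB
  obtain ⟨x₀', hx₀', hBx'⟩ := mem_deletionForest.mp hB'
  rw [← hBx] at hx
  rw [← hBx'] at hx'
  rw [← hBx, ← hBx', blockOf_eq (mem_blockOf.mp hx).2,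
    blockOf_eq (h.trans (delreach_symm (mem_blockOf.mp hx').2))]

lemma sOf_inj {N : FinDigraph} (hwf : N.WF) (hac : N.Acyclic) {B B' : Finset ℕ}
    (hB : B ∈ deletionForest N) (hB' : B' ∈ deletionForest N)
    (h : sOf N B = sOf N B') : B = B' := by
  obtain ⟨x₀, hx₀, hBx⟩ := mem_deletionForest.mp hB
  obtain ⟨x₀', hx₀', hBx'⟩ := mem_deletionForest.mp hB'
  have h1 := (sOf_spec hwf hac hB).2.2 x₀ (by
    rw [← hBx]; exact mem_blockOf.mpr ⟨hx₀, ReflTransGen.refl⟩)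
  have h2 := (sOf_spec hwf hac hB').2.2 x₀' (by
    rw [← hBx']; exact mem_blockOf.mpr ⟨hx₀', ReflTransGen.refl⟩)
  rw [h] at h1
  have : DelReach N x₀ x₀' := h1.trans (delreach_symm h2)
  rw [← hBx, ← hBx', blockOf_eq this]

lemma card_deletionForest_le {N : FinDigraph} (hwf : N.WF) (hac : N.Acyclic)
    {r : ℕ} (hr : N.IsSource r) (hrall : ∀ v ∈ N.verts, N.Reaches r v) :
    (deletionForest N).card ≤ N.hybNum + 1 := by
  classical
  have hmem : ∀ B ∈ deletionForest N,
      sOf N B ∈ N.verts.filter (fun v => N.indeg v = 0 ∨ 2 ≤ N.indeg v) := by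
    intro B hB
    obtain ⟨h1, h2, _⟩ := sOf_spec hwf hac hB
    refine Finset.mem_filter.mpr ⟨h1, ?_⟩
    by_contra hcon
    push_neg at hcon
    have hdeg : N.indeg (sOf N B) = 1 := by omega
    have hne : (N.edges.filter (fun e => e.2 = sOf N B)).Nonempty := by
      apply Finset.card_pos.mp
      rw [show (N.edges.filter (fun e => e.2 = sOf N B)).card = N.indeg (sOf N B) from rfl,
        hdeg]
      omega
    obtain ⟨e, he⟩ := hne
    rw [Finset.mem_filter] at he
    have h4 : (e.1, sOf N B) ∈ N.edges := by rw [← he.2]; exact he.1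
    exact h2 e.1 (keptG_adj.mpr ⟨h4, le_of_eq hdeg⟩)
  have hcard := Finset.card_le_card_of_injOn (sOf N) hmem
    (fun B hB B' hB' h => sOf_inj hwf hac hB hB' h)
  refine hcard.trans ?_
  rw [Finset.filter_or]
  refine (Finset.card_union_le _ _).trans ?_
  have h1 : N.verts.filter (fun v => N.indeg v = 0) ⊆ {r} := by
    intro v hv
    rw [Finset.mem_filter] at hv
    rcases (hrall v hv.1).cases_tail with h | ⟨c, _, hcv⟩
    · rw [Finset.mem_singleton, h]
    · exact (no_edge_of_indeg_zero hv.2 hcv).elim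
  have h2 : (N.verts.filter fun v => 2 ≤ N.indeg v).card ≤ N.hybNum := by
    rw [FinDigraph.hybNum, Finset.card_eq_sum_ones]
    refine Finset.sum_le_sum ?_
    intro i hi
    rw [Finset.mem_filter] at hi
    omega
  have h3 := Finset.card_le_card h1
  rw [Finset.card_singleton] at h3
  omega

end AAFwork4
section AAFwork5
open Relation FinDigraph

lemma leaf_of_mem {N T : FinDigraph} (hTX : T.leaves = N.leaves) {a : ℕ}
    (ha : a ∈ N.leaves) : T.IsLeaf a := isLeaf_iff.mpr (hTX ▸ ha)

lemma span_in_comp {N T : FinDigraph} (hac : N.Acyclic)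
    (hTree : IsPhyloTree T) (hTX : T.leaves = N.leaves)
    {E : Finset (ℕ × ℕ)} {φ : ℕ → ℕ} {P : ℕ → ℕ → List ℕ}
    (hE : E ⊆ N.edges) (hsub : IsSubdivisionVia T E φ P)
    {s : ℕ} (hs : NoKIn N s) {a b v : ℕ}
    (haL : a ∈ N.leaves) (hbL : b ∈ N.leaves)
    (ha : (keptG N).Reaches s a) (hb : (keptG N).Reaches s b)
    (hpath : OnTreePath T a b v) : (keptG N).Reaches s (φ v) := by
  obtain ⟨rT, hrT, _, hrall⟩ := hTree.2.2.1
  have haT : T.IsLeaf a := leaf_of_mem hTX haL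
  have hbT : T.IsLeaf b := leaf_of_mem hTX hbL
  obtain ⟨m, h1, h2, h3⟩ := exists_lca' hTree.1 (tree_up hTree) haT.1
    (hrall a haT.1) (hrall b hbT.1)
  have hφm : (keptG N).Reaches s (φ m) :=
    philca_mem hac hTree.1 hTree.2.1 hE hsub hs haT hbT ha hb h1 h2 h3
  rcases hpath with ⟨hva, hnvb⟩ | ⟨hvb, hnva⟩ | ⟨hva, hvb, hmin⟩
  · have hmv : T.Reaches m v := by
      rcases anc_chain (tree_up hTree) hva h1 with h | h
      · exact absurd (h.trans h2) hnvb
      · exact h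
    refine between_in_comp hac hs hφm ha (reaches_image hE hsub hmv) ?_
    have := reaches_image hE hsub hva
    rwa [hsub.2.1 a haT] at this
  · have hmv : T.Reaches m v := by
      rcases anc_chain (tree_up hTree) hvb h2 with h | h
      · exact absurd (h.trans h1) hnva
      · exact h
    refine between_in_comp hac hs hφm hb (reaches_image hE hsub hmv) ?_
    have := reaches_image hE hsub hvb
    rwa [hsub.2.1 b hbT] at this
  · exact philca_mem hac hTree.1 hTree.2.1 hE hsub hs haT hbT ha hb hva hvb hmin

lemma triple_iff_ktrip {N T : FinDigraph} (hac : N.Acyclic)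
    (hTree : IsPhyloTree T) (hTX : T.leaves = N.leaves)
    {E : Finset (ℕ × ℕ)} {φ : ℕ → ℕ} {P : ℕ → ℕ → List ℕ}
    (hE : E ⊆ N.edges) (hsub : IsSubdivisionVia T E φ P)
    {s : ℕ} (hs : NoKIn N s) {a b c : ℕ}
    (haL : a ∈ N.leaves) (hbL : b ∈ N.leaves) (hcL : c ∈ N.leaves)
    (ha : (keptG N).Reaches s a) (hb : (keptG N).Reaches s b)
    (hc : (keptG N).Reaches s c) :
    Triple T a b c ↔ Triple (keptG N) a b c := by
  have haT : T.IsLeaf a := leaf_of_mem hTX haL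
  have hbT : T.IsLeaf b := leaf_of_mem hTX hbL
  have hcT : T.IsLeaf c := leaf_of_mem hTX hcL
  constructor
  · rintro ⟨u, v, hu, hv, huv, hvu⟩
    have huV : u ∈ T.verts := reaches_mem_left hTree.1 hu.1 haT.1
    have hvV : v ∈ T.verts := reaches_mem_left hTree.1 hv.1 haT.1
    have hku : IsLCA (keptG N) a b (φ u) :=
      phi_lca_kept hac hTree.1 hTree.2.1 hE hsub hs haT hbT ha hb hu.1 hu.2.1 hu.2.2
    have hkv : IsLCA (keptG N) a c (φ v) :=
      phi_lca_kept hac hTree.1 hTree.2.1 hE hsub hs haT hcT ha hc hv.1 hv.2.1 hv.2.2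
    refine ⟨φ u, φ v, hku, hkv, ?_, ?_⟩
    · intro hcontra
      exact huv (hsub.1 (Finset.mem_coe.mpr huV) (Finset.mem_coe.mpr hvV) hcontra)
    · have hsu : (keptG N).Reaches s (φ u) :=
        philca_mem hac hTree.1 hTree.2.1 hE hsub hs haT hbT ha hb hu.1 hu.2.1 hu.2.2
      have hsv : (keptG N).Reaches s (φ v) :=
        philca_mem hac hTree.1 hTree.2.1 hE hsub hs haT hcT ha hc hv.1 hv.2.1 hv.2.2
      exact reach_in_comp hac hs hsv (reaches_image hE hsub hvu) hsu
  · rintro ⟨u', v', hu', hv', hne, hvu'⟩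
    obtain ⟨rT, hrT, _, hrall⟩ := hTree.2.2.1
    obtain ⟨mab, h1, h2, h3⟩ := exists_lca' hTree.1 (tree_up hTree) haT.1
      (hrall a haT.1) (hrall b hbT.1)
    obtain ⟨mac, g1, g2, g3⟩ := exists_lca' hTree.1 (tree_up hTree) haT.1
      (hrall a haT.1) (hrall c hcT.1)
    have hkab : IsLCA (keptG N) a b (φ mab) :=
      phi_lca_kept hac hTree.1 hTree.2.1 hE hsub hs haT hbT ha hb h1 h2 h3
    have hkac : IsLCA (keptG N) a c (φ mac) :=
      phi_lca_kept hac hTree.1 hTree.2.1 hE hsub hs haT hcT ha hc g1 g2 g3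
    have hequ : u' = φ mab :=
      kreach_antisymm hac (hkab.2.2 u' hu'.1 hu'.2.1) (hu'.2.2 _ hkab.1 hkab.2.1)
    have heqv : v' = φ mac :=
      kreach_antisymm hac (hkac.2.2 v' hv'.1 hv'.2.1) (hv'.2.2 _ hkac.1 hkac.2.1)
    rw [hequ, heqv] at hvu' hne
    refine ⟨mab, mac, ⟨h1, h2, h3⟩, ⟨g1, g2, g3⟩, ?_, ?_⟩
    · rintro rfl
      exact hne rfl
    · rcases anc_chain (tree_up hTree) h1 g1 with h | h
      · exfalso
        have hsu : (keptG N).Reaches s (φ mab) :=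
          philca_mem hac hTree.1 hTree.2.1 hE hsub hs haT hbT ha hb h1 h2 h3
        have hsv : (keptG N).Reaches s (φ mac) :=
          philca_mem hac hTree.1 hTree.2.1 hE hsub hs haT hcT ha hc g1 g2 g3
        have hk1 : (keptG N).Reaches (φ mab) (φ mac) :=
          reach_in_comp hac hs hsu (reaches_image hE hsub h) hsv
        exact hne (kreach_antisymm hac hk1 hvu')
      · exact h
  
end AAFwork5
section AAFwork6
open Relation FinDigraph

lemma mem_leaves_of_mem_df {N : FinDigraph} {B : Finset ℕ}
    (hB : B ∈ deletionForest N) {x : ℕ} (hx : x ∈ B) : x ∈ N.leaves := by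
  obtain ⟨x₀, hx₀, hBx⟩ := mem_deletionForest.mp hB
  rw [← hBx] at hx
  exact (mem_blockOf.mp hx).1

end AAFwork6

/-- Let `𝒯` be a set of rooted binary phylogenetic `X`-trees and let `N`
be a hybridization network for `𝒯` with hybridization number `k`. Then the deletion
forest of `N` is an acyclic agreement forest of `𝒯` with at most `k + 1` components. -/
theorem deletionForest_isAAF
    {ι : Type} (𝒯 : ι → FinDigraph) (X : Finset ℕ)
    (hT : ∀ i, IsTreeOn (𝒯 i) X)
    (N : FinDigraph) (k : ℕ)
    (hN : IsHybNetworkFor N 𝒯 X) (hk : N.hybNum = k) :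
    IsAAF 𝒯 (deletionForest N) ∧ (deletionForest N).card ≤ k + 1 := by
  open Relation FinDigraph in
  obtain ⟨hBN, hXN, hdisp⟩ := hN
  obtain ⟨hwf, hac, ⟨r, hrS, hrOut, hrall⟩, hdeg⟩ := hBN
  subst hk
  have hstep : ∀ C C', IGAdj 𝒯 (deletionForest N) C C' →
      N.Reaches (sOf N C) (sOf N C') ∧ sOf N C ≠ sOf N C' := by
    rintro C C' ⟨hC, hC', hne, i, rr, rr', hrr, hrr', hreach⟩
    obtain ⟨hTree_i, hTX_i⟩ := hT i
    have hTXN : (𝒯 i).leaves = N.leaves := by rw [hTX_i, hXN]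
    obtain ⟨E, hE, φ, P, hsub⟩ := hdisp i
    have hspC := sOf_spec hwf hac hC
    have hspC' := sOf_spec hwf hac hC'
    obtain ⟨a, ha, b, hb, hpath⟩ := hrr.1
    obtain ⟨a', ha', b', hb', hpath'⟩ := hrr'.1
    have hKφr : (keptG N).Reaches (sOf N C) (φ rr) :=
      span_in_comp hac hTree_i hTXN hE hsub hspC.2.1
        (mem_leaves_of_mem_df hC ha) (mem_leaves_of_mem_df hC hb)
        (sOf_kreach hwf hac hC ha) (sOf_kreach hwf hac hC hb) hpath
    have hKφr' : (keptG N).Reaches (sOf N C') (φ rr') :=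
      span_in_comp hac hTree_i hTXN hE hsub hspC'.2.1
        (mem_leaves_of_mem_df hC' ha') (mem_leaves_of_mem_df hC' hb')
        (sOf_kreach hwf hac hC' ha') (sOf_kreach hwf hac hC' hb') hpath'
    have hNr : N.Reaches (sOf N C) (φ rr') :=
      (kreach_to_reach hKφr).trans (reaches_image hE hsub hreach)
    rcases reach_into_comp hspC'.2.1 hNr hKφr' with h | h
    · exact absurd (sOf_inj hwf hac hC' hC (noKIn_of_kreach hspC.2.1 h)) (Ne.symm hne)
    · exact ⟨h, fun heq => hne (sOf_inj hwf hac hC hC' heq)⟩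
  refine ⟨⟨⟨?_, ?_⟩, ?_⟩, card_deletionForest_le hwf hac hrS hrall⟩
  · -- forests
    intro i
    obtain ⟨hTree_i, hTX_i⟩ := hT i
    have hTXN : (𝒯 i).leaves = N.leaves := by rw [hTX_i, hXN]
    refine ⟨?_, ?_, ?_, ?_⟩
    · intro B hB
      obtain ⟨x₀, hx₀, hBx⟩ := mem_deletionForest.mp hB
      exact ⟨x₀, by rw [← hBx]; exact mem_blockOf.mpr ⟨hx₀, ReflTransGen.refl⟩⟩
    · intro B hB x hx
      exact leaf_of_mem hTXN (mem_leaves_of_mem_df hB hx)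
    · intro x hxL
      have hxN : x ∈ N.leaves := by rw [← hTXN]; exact isLeaf_iff.mp hxL
      exact ⟨blockOf N x, mem_deletionForest.mpr ⟨x, hxN, rfl⟩,
        mem_blockOf.mpr ⟨hxN, ReflTransGen.refl⟩⟩
    · intro B hB B' hB' hne v hv hv'
      obtain ⟨E, hE, φ, P, hsub⟩ := hdisp i
      obtain ⟨a, ha, b, hb, hpath⟩ := hv
      obtain ⟨a', ha', b', hb', hpath'⟩ := hv'
      have hsp := sOf_spec hwf hac hB
      have hsp' := sOf_spec hwf hac hB'
      have h1 : (keptG N).Reaches (sOf N B) (φ v) :=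
        span_in_comp hac hTree_i hTXN hE hsub hsp.2.1
          (mem_leaves_of_mem_df hB ha) (mem_leaves_of_mem_df hB hb)
          (sOf_kreach hwf hac hB ha) (sOf_kreach hwf hac hB hb) hpath
      have h2 : (keptG N).Reaches (sOf N B') (φ v) :=
        span_in_comp hac hTree_i hTXN hE hsub hsp'.2.1
          (mem_leaves_of_mem_df hB' ha') (mem_leaves_of_mem_df hB' hb')
          (sOf_kreach hwf hac hB' ha') (sOf_kreach hwf hac hB' hb') hpath'
      exact hne (sOf_inj hwf hac hB hB' (source_eq hsp.2.1 hsp'.2.1 h1 h2))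
  · -- same triples
    intro i j B hB a ha b hb c hc
    obtain ⟨hTree_i, hTX_i⟩ := hT i
    obtain ⟨hTree_j, hTX_j⟩ := hT j
    have hTXNi : (𝒯 i).leaves = N.leaves := by rw [hTX_i, hXN]
    have hTXNj : (𝒯 j).leaves = N.leaves := by rw [hTX_j, hXN]
    obtain ⟨Ei, hEi, φi, Pi, hsubi⟩ := hdisp i
    obtain ⟨Ej, hEj, φj, Pj, hsubj⟩ := hdisp j
    have hsp := sOf_spec hwf hac hB
    have haN := mem_leaves_of_mem_df hB ha
    have hbN := mem_leaves_of_mem_df hB hb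
    have hcN := mem_leaves_of_mem_df hB hc
    have hKa := sOf_kreach hwf hac hB ha
    have hKb := sOf_kreach hwf hac hB hb
    have hKc := sOf_kreach hwf hac hB hc
    exact (triple_iff_ktrip hac hTree_i hTXNi hEi hsubi hsp.2.1 haN hbN hcN
      hKa hKb hKc).trans
      (triple_iff_ktrip hac hTree_j hTXNj hEj hsubj hsp.2.1 haN hbN hcN
      hKa hKb hKc).symm
  · -- IG acyclic
    intro B B' hadj hrtg
    have hchain : N.Reaches (sOf N B') (sOf N B) := by
      clear hadj
      induction hrtg with
      | refl => exact ReflTransGen.refl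
      | tail h1 h2 ih => exact ih.trans (hstep _ _ h2).1
    have h1 := hstep _ _ hadj
    exact h1.2 (reaches_antisymm hac h1.1 hchain)
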